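/- arXiv:1005.3932 — 2 statements merged into one kernel-verified Lean document; each statement's English description precedes it below -/
import Mathlib

section
/- Let q ≥ 1 and N ≥ 1 be integers, let p_1 < p_2 < … < p_N be the first N primes, and set φ_n = log p_n. Then for any two distinct N-tuples (h_1,…,h_N), (k_1,…,k_N) of nonnegative integers each summing to q, we have |Σ_{n=1}^N (h_n − k_n) φ_n| ≥ p_N^{−q}. -/
open Real Finset

private lemma log_gap (a b P q : ℕ) (ha : 0 < a) (hab : a < b)
    (hb : b ≤ P ^ q) :
    ((P : ℝ)) ^ (-(q : ℤ)) ≤ Real.log b - Real.log a := by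
  have ha' : (0:ℝ) < a := by exact_mod_cast ha
  have hb' : (0:ℝ) < b := by exact_mod_cast ha.trans hab
  have h1 : Real.log ((a:ℝ)/b) ≤ (a:ℝ)/b - 1 := Real.log_le_sub_one_of_pos (by positivity)
  rw [Real.log_div ha'.ne' hb'.ne'] at h1
  have hcast : (a:ℝ) + 1 ≤ b := by exact_mod_cast hab
  have h2 : (a:ℝ)/b ≤ 1 - 1/b := by
    rw [sub_div' hb'.ne', div_le_div_iff₀ hb' hb']
    nlinarith
  have h3 : (1:ℝ)/b ≤ Real.log b - Real.log a := by linarith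
  refine le_trans ?_ h3
  rw [zpow_neg, zpow_natCast, one_div]
  apply inv_anti₀ hb'
  exact_mod_cast hb

theorem stmt0 (q N : ℕ) (hq : 1 ≤ q) (hN : 1 ≤ N)
    (h k : Fin N → ℕ)
    (hh : ∑ n, h n = q) (hk : ∑ n, k n = q) (hne : h ≠ k) :
    ((Nat.nth Nat.Prime (N - 1) : ℝ)) ^ (-(q : ℤ)) ≤
      |∑ n : Fin N, ((h n : ℝ) - (k n : ℝ)) * Real.log (Nat.nth Nat.Prime n)| := by
  set p : ℕ → ℕ := Nat.nth Nat.Prime with hpdef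
  have hinf : {n : ℕ | n.Prime}.Infinite := Nat.infinite_setOf_prime
  have hpp : ∀ n, (p n).Prime := fun n => Nat.prime_nth_prime n
  have hppos : ∀ n, 0 < p n := fun n => (hpp n).pos
  have pinj : Function.Injective p := Nat.nth_injective hinf
  set A : ℕ := ∏ n : Fin N, p n ^ h n with hA
  set B : ℕ := ∏ n : Fin N, p n ^ k n with hB
  have hApos : 0 < A := Finset.prod_pos fun n _ => pow_pos (hppos n) _
  have hBpos : 0 < B := Finset.prod_pos fun n _ => pow_pos (hppos n) _
  -- factorization
  have hfac : ∀ (f : Fin N → ℕ),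
      (∏ n : Fin N, p n ^ f n).factorization = ∑ n : Fin N, Finsupp.single (p n) (f n) := by
    intro f
    rw [show (∏ n : Fin N, p n ^ f n).factorization
        = ∑ n : Fin N, ((p n ^ f n : ℕ)).factorization from
      Nat.factorization_prod (fun x _ => pow_ne_zero _ (hppos x).ne')]
    exact Finset.sum_congr rfl fun n _ => (hpp n).factorization_pow
  have key : ∀ (f : Fin N → ℕ) (m : Fin N),
      (∑ n : Fin N, Finsupp.single (p n) (f n)) (p m) = f m := by
    intro f m
    rw [Finsupp.finset_sum_apply]
    rw [Finset.sum_eq_single m]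
    · simp [Finsupp.single_apply]
    · intro n _ hnm
      rw [Finsupp.single_apply, if_neg]
      intro hc
      exact hnm (Fin.val_injective (pinj hc))
    · simp
  have hANeB : A ≠ B := by
    obtain ⟨m, hm⟩ := Function.ne_iff.mp hne
    intro hAB
    apply hm
    have := congrArg (fun x : ℕ => x.factorization (p m)) hAB
    simpa [hA, hB, hfac, key] using this
  -- log of products
  have hlog : ∀ (f : Fin N → ℕ),
      ∑ n : Fin N, (f n : ℝ) * Real.log (p n) = Real.log (∏ n : Fin N, p n ^ f n : ℕ) := by
    intro f
    push_cast
    rw [Real.log_prod (fun n _ => pow_ne_zero _ (by exact_mod_cast (hppos n).ne'))]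
    exact Finset.sum_congr rfl fun n _ => (Real.log_pow _ _).symm
  have hsum : ∑ n : Fin N, ((h n : ℝ) - (k n : ℝ)) * Real.log (p n)
      = Real.log A - Real.log B := by
    rw [← hlog h, ← hlog k, ← Finset.sum_sub_distrib]
    exact Finset.sum_congr rfl fun n _ => (sub_mul _ _ _)
  -- bounds
  have hmono : ∀ n : Fin N, p n ≤ p (N - 1) := fun n =>
    Nat.nth_monotone hinf (by omega)
  have hbound : ∀ (f : Fin N → ℕ), (∑ n : Fin N, f n = q) → (∏ n : Fin N, p n ^ f n) ≤ p (N - 1) ^ q := by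
    intro f hf
    calc (∏ n : Fin N, p n ^ f n) ≤ ∏ n : Fin N, p (N - 1) ^ f n :=
          Finset.prod_le_prod' fun n _ => Nat.pow_le_pow_left (hmono n) _
      _ = p (N - 1) ^ (∑ n : Fin N, f n) := Finset.prod_pow_eq_pow_sum _ _ _
      _ = p (N - 1) ^ q := by rw [hf]
  rw [hsum]
  rcases hANeB.lt_or_gt with hlt | hlt
  · calc ((p (N-1):ℝ))^(-(q:ℤ)) ≤ Real.log B - Real.log A :=
          log_gap A B _ q hApos hlt (hbound k hk)
      _ = -(Real.log A - Real.log B) := by ring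
      _ ≤ |Real.log A - Real.log B| := neg_le_abs _
  · exact le_trans (log_gap B A _ q hBpos hlt (hbound h hh)) (le_abs_self _)
end

section
/- Let λ_1, …, λ_N be distinct real numbers with |λ_m − λ_n| ≥ δ for all m ≠ n, where δ > 0. Then for any complex numbers x_1, …, x_N and y_1, …, y_N, |Σ_{m≠n} x_m y_n / (λ_m − λ_n)| ≤ (π/δ) (Σ_m |x_m|^2)^{1/2} (Σ_n |y_n|^2)^{1/2}. -/
open Finset Real

open Matrix


lemma basel_tail (δ : ℝ) (hδ : 0 < δ) (k p : ℕ) :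
    ∑ j ∈ Finset.range p, 1 / (((k + j + 1 : ℕ) : ℝ) * δ)^2 ≤ π^2 / 6 / δ^2 := by
  have h1 : ∀ j ∈ Finset.range p, 1 / (((k + j + 1 : ℕ) : ℝ) * δ)^2
      = (1 / (((k + j + 1 : ℕ) : ℝ))^2) * (1/δ^2) := by
    intro j _; rw [mul_pow]; ring
  rw [Finset.sum_congr rfl h1, ← Finset.sum_mul]
  have h2 : ∑ j ∈ Finset.range p, (1 : ℝ) / (((k + j + 1 : ℕ) : ℝ))^2 ≤ π^2/6 := by
    have hs := hasSum_zeta_two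
    have : ∑ j ∈ Finset.range p, (1 : ℝ) / (((k + j + 1 : ℕ) : ℝ))^2
        = ∑ j ∈ (Finset.range p).image (fun j => k + j + 1), (1:ℝ)/(j:ℝ)^2 := by
      rw [Finset.sum_image]
      intro a _ b _ h; simp only at h; omega
    rw [this]
    exact sum_le_hasSum _ (fun i _ => by positivity) hs
  calc _ ≤ (π^2/6) * (1/δ^2) := by
        apply mul_le_mul_of_nonneg_right h2; positivity
    _ = π^2/6/δ^2 := by ring

lemma sep_sum {ι : Type*} [DecidableEq ι] (δ : ℝ) (hδ : 0 < δ) :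
    ∀ (p : ℕ) (P : Finset ι) (v : ι → ℝ) (k : ℕ), P.card = p →
    (∀ r ∈ P, ((k:ℝ) + 1) * δ ≤ v r) →
    (∀ r ∈ P, ∀ t ∈ P, r ≠ t → δ ≤ |v r - v t|) →
    ∑ r ∈ P, 1 / (v r)^2 ≤ ∑ j ∈ Finset.range p, 1 / (((k + j + 1 : ℕ) : ℝ) * δ)^2 := by
  intro p
  induction p with
  | zero => intro P v k hc _ _; rw [Finset.card_eq_zero.mp hc]; simp
  | succ n ih =>
    intro P v k hc hlow hsep
    have hne : P.Nonempty := Finset.card_pos.mp (by omega)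
    obtain ⟨r0, hr0, hmin⟩ := P.exists_min_image v hne
    have hstep : ∀ r ∈ P.erase r0, (((k+1):ℕ) + 1 : ℝ) * δ ≤ v r := by
      intro r hr
      have hrP := Finset.mem_of_mem_erase hr
      have hne' : r ≠ r0 := Finset.ne_of_mem_erase hr
      have h1 := hmin r hrP
      have h2 := hsep r hrP r0 hr0 hne'
      have h3 := hlow r0 hr0
      have : δ ≤ v r - v r0 := by
        rcases abs_cases (v r - v r0) with ⟨he, _⟩ | ⟨he, hneg⟩
        · linarith [h2, he.symm.le]
        · linarith
      push_cast
      linarith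
    have hrec := ih (P.erase r0) v (k+1) (by rw [Finset.card_erase_of_mem hr0, hc]; omega)
      hstep (fun r hr t ht => hsep r (Finset.mem_of_mem_erase hr) t (Finset.mem_of_mem_erase ht))
    have hsplit : ∑ r ∈ P, 1/(v r)^2 = 1/(v r0)^2 + ∑ r ∈ P.erase r0, 1/(v r)^2 :=
      (Finset.add_sum_erase P _ hr0).symm
    have hv0 : ((k:ℝ)+1) * δ ≤ v r0 := hlow r0 hr0
    have hv0pos : 0 < v r0 := lt_of_lt_of_le (by positivity) hv0
    have hterm : 1/(v r0)^2 ≤ 1 / (((k + 0 + 1 : ℕ):ℝ) * δ)^2 := by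
      apply one_div_le_one_div_of_le (by positivity)
      push_cast
      have : ((k:ℝ)+1)*δ ≤ v r0 := hv0
      nlinarith [hv0pos, mul_pos (by positivity : (0:ℝ) < ((k:ℝ)+1)) hδ]
    have hsum2 : ∑ j ∈ Finset.range (n+1), 1 / (((k + j + 1 : ℕ) : ℝ) * δ)^2
        = 1 / (((k + 0 + 1 : ℕ) : ℝ) * δ)^2 + ∑ j ∈ Finset.range n, 1 / (((k + 1 + j + 1 : ℕ) : ℝ) * δ)^2 := by
      rw [Finset.sum_range_succ', add_comm]
      congr 1
      apply Finset.sum_congr rfl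
      intro j _
      norm_num
      ring_nf
    rw [hsplit, hsum2]
    exact add_le_add hterm hrec

lemma d_bound {N : ℕ} (lam : Fin N → ℝ) (δ : ℝ) (hδ : 0 < δ)
    (hsep : ∀ m n : Fin N, m ≠ n → δ ≤ |lam m - lam n|) (s : Fin N) :
    ∑ r ∈ Finset.univ.erase s, 1 / (lam r - lam s)^2 ≤ π^2 / 3 / δ^2 := by
  classical
  set T := Finset.univ.erase s
  set P := T.filter (fun r => lam s < lam r)
  set Q := T.filter (fun r => ¬ lam s < lam r)
  have hPQ : ∑ r ∈ T, 1/(lam r - lam s)^2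
      = ∑ r ∈ P, 1/(lam r - lam s)^2 + ∑ r ∈ Q, 1/(lam r - lam s)^2 :=
    (Finset.sum_filter_add_sum_filter_not T _ _).symm
  have hP : ∑ r ∈ P, 1/(lam r - lam s)^2 ≤ π^2/6/δ^2 := by
    refine le_trans (sep_sum δ hδ P.card P (fun r => lam r - lam s) 0 rfl ?_ ?_)
      (basel_tail δ hδ 0 P.card)
    · intro r hr
      simp only [P, T, Finset.mem_filter, Finset.mem_erase] at hr
      have := hsep r s hr.1.1
      rw [abs_of_pos (by linarith [hr.2])] at this
      push_cast; linarith
    · intro r hr t ht hrt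
      have := hsep r t hrt
      simpa using this
  have hQ : ∑ r ∈ Q, 1/(lam r - lam s)^2 ≤ π^2/6/δ^2 := by
    have hrw : ∀ r ∈ Q, 1/(lam r - lam s)^2 = 1/(lam s - lam r)^2 := by
      intro r _; rw [show lam s - lam r = -(lam r - lam s) by ring, neg_pow]; norm_num
    rw [Finset.sum_congr rfl hrw]
    refine le_trans (sep_sum δ hδ Q.card Q (fun r => lam s - lam r) 0 rfl ?_ ?_)
      (basel_tail δ hδ 0 Q.card)
    · intro r hr
      simp only [Q, T, Finset.mem_filter, Finset.mem_erase] at hr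
      have := hsep r s hr.1.1
      rw [abs_of_nonpos (by linarith [hr.2])] at this
      push_cast; linarith
    · intro r hr t ht hrt
      have := hsep t r (Ne.symm hrt)
      rw [show lam s - lam r - (lam s - lam t) = lam t - lam r by ring]
      exact this
  rw [hPQ]
  have h2 : π^2/3/δ^2 = π^2/6/δ^2 + π^2/6/δ^2 := by ring
  linarith


noncomputable def ar {N : ℕ} (lam : Fin N → ℝ) (r s : Fin N) : ℝ :=
  if r = s then 0 else (lam r - lam s)⁻¹

noncomputable def Am {N : ℕ} (lam : Fin N → ℝ) (r s : Fin N) : ℂ :=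
  ((ar lam r s : ℝ) : ℂ)

lemma ar_skew {N : ℕ} (lam : Fin N → ℝ) (r s : Fin N) : ar lam s r = - ar lam r s := by
  unfold ar
  rcases eq_or_ne r s with h | h
  · simp [h]
  · rw [if_neg (Ne.symm h), if_neg h]
    rw [show lam s - lam r = -(lam r - lam s) by ring, inv_neg]

lemma Am_skew {N : ℕ} (lam : Fin N → ℝ) (r s : Fin N) : Am lam s r = - Am lam r s := by
  unfold Am; rw [ar_skew]; push_cast; ring

lemma Am_conj {N : ℕ} (lam : Fin N → ℝ) (r s : Fin N) :
    (starRingEnd ℂ) (Am lam r s) = Am lam r s := Complex.conj_ofReal _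

lemma Am_diag {N : ℕ} (lam : Fin N → ℝ) (s : Fin N) : Am lam s s = 0 := by
  unfold Am ar; simp

-- pointwise partial fraction identity
lemma Am_pf {N : ℕ} (lam : Fin N → ℝ)
    (hinj : ∀ r s : Fin N, r ≠ s → lam r ≠ lam s) (s t : Fin N) (hst : s ≠ t) (r : Fin N) :
    Am lam r s * Am lam r t = Am lam s t * (Am lam r s - Am lam r t)
      + (if r = s then Am lam s t ^ 2 else 0) + (if r = t then Am lam s t ^ 2 else 0) := by
  rcases eq_or_ne r s with hrs | hrs
  · subst hrs
    rw [Am_diag, if_pos rfl, if_neg hst]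
    ring
  · rcases eq_or_ne r t with hrt | hrt
    · subst hrt
      rw [Am_diag, if_neg hrs, if_pos rfl, Am_skew lam s r]
      ring
    · rw [if_neg hrs, if_neg hrt]
      unfold Am ar
      rw [if_neg hrs, if_neg hrt, if_neg hst]
      have h1 : ((lam r : ℂ) - lam s) ≠ 0 := by
        simpa [sub_eq_zero] using fun h => hinj r s hrs (by exact_mod_cast h)
      have h2 : ((lam r : ℂ) - lam t) ≠ 0 := by
        simpa [sub_eq_zero] using fun h => hinj r t hrt (by exact_mod_cast h)
      have h3 : ((lam s : ℂ) - lam t) ≠ 0 := by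
        simpa [sub_eq_zero] using fun h => hinj s t hst (by exact_mod_cast h)
      push_cast
      field_simp
      ring


lemma d_bound' {N : ℕ} (lam : Fin N → ℝ) (δ : ℝ) (hδ : 0 < δ)
    (hsep : ∀ m n : Fin N, m ≠ n → δ ≤ |lam m - lam n|) (s : Fin N) :
    ∑ r : Fin N, (ar lam r s)^2 ≤ π^2 / 3 / δ^2 := by
  classical
  have h0 : ∑ r : Fin N, (ar lam r s)^2 = ∑ r ∈ Finset.univ.erase s, 1 / (lam r - lam s)^2 := by
    rw [← Finset.sum_erase (f := fun r => (ar lam r s)^2) (a := s) Finset.univ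
      (by simp [ar])]
    refine Finset.sum_congr rfl fun r hr => ?_
    rw [ar, if_neg (Finset.ne_of_mem_erase hr)]
    rw [inv_pow, inv_eq_one_div]
  rw [h0]
  exact d_bound lam δ hδ hsep s

lemma eig_bound {N : ℕ} (lam : Fin N → ℝ) (δ : ℝ) (hδ : 0 < δ)
    (hsep : ∀ m n : Fin N, m ≠ n → δ ≤ |lam m - lam n|)
    (μ : ℝ) (c : Fin N → ℂ) (hc : ∑ r, Complex.normSq (c r) = 1)
    (heig : ∀ r, ∑ s, Am lam r s * c s = (Complex.I * μ) * c r) :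
    |μ| ≤ π / δ := by
  classical
  have hinj : ∀ r s : Fin N, r ≠ s → lam r ≠ lam s := by
    intro r s h he
    have := hsep r s h
    rw [he, sub_self, abs_zero] at this
    linarith
  set A := Am lam with hA
  have heig' : ∀ s, ∑ t, (starRingEnd ℂ) (c t) * A s t = -(Complex.I * μ) * (starRingEnd ℂ) (c s) := by
    intro s
    have h0 : ∑ t, (starRingEnd ℂ) (c t) * A s t = (starRingEnd ℂ) (∑ t, A s t * c t) := by
      rw [_root_.map_sum]
      exact Finset.sum_congr rfl fun t _ => by rw [_root_.map_mul, hA, Am_conj, mul_comm]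
    rw [h0, heig s, _root_.map_mul, _root_.map_mul, Complex.conj_I, Complex.conj_ofReal]
    ring
  have heig'' : ∀ t, ∑ s, c s * A s t = -(Complex.I * μ) * c t := by
    intro t
    have h0 : ∑ s, c s * A s t = -∑ s, A t s * c s := by
      rw [← Finset.sum_neg_distrib]
      refine Finset.sum_congr rfl fun s _ => ?_
      rw [hA, Am_skew lam t s]
      ring
    rw [h0, heig t]; ring
  -- Step 1: expansion
  have expand : ∑ r, (∑ s, A r s * c s) * (starRingEnd ℂ) (∑ t, A r t * c t)
      = ∑ s, ∑ t, c s * (starRingEnd ℂ) (c t) * ∑ r, A r s * A r t := by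
    have h1 : ∀ r, (starRingEnd ℂ) (∑ t, A r t * c t) = ∑ t, A r t * (starRingEnd ℂ) (c t) := by
      intro r
      rw [_root_.map_sum]
      exact Finset.sum_congr rfl fun t _ => by rw [_root_.map_mul, hA, Am_conj]
    calc ∑ r, (∑ s, A r s * c s) * (starRingEnd ℂ) (∑ t, A r t * c t)
        = ∑ r, ∑ s, ∑ t, (A r s * c s) * (A r t * (starRingEnd ℂ) (c t)) := by
          refine Finset.sum_congr rfl fun r _ => ?_
          rw [h1, Finset.sum_mul_sum]
      _ = ∑ s, ∑ t, ∑ r, (A r s * c s) * (A r t * (starRingEnd ℂ) (c t)) := by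
          rw [Finset.sum_comm]
          exact Finset.sum_congr rfl fun s _ => Finset.sum_comm
      _ = ∑ s, ∑ t, c s * (starRingEnd ℂ) (c t) * ∑ r, A r s * A r t := by
          refine Finset.sum_congr rfl fun s _ => Finset.sum_congr rfl fun t _ => ?_
          rw [Finset.mul_sum]
          exact Finset.sum_congr rfl fun r _ => by ring
  -- Step 2: LHS via eigen equation
  have lhs_eq : ∑ r, (∑ s, A r s * c s) * (starRingEnd ℂ) (∑ t, A r t * c t)
      = ((μ^2 : ℝ) : ℂ) * ∑ r, (Complex.normSq (c r) : ℂ) := by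
    rw [Finset.mul_sum]
    refine Finset.sum_congr rfl fun r _ => ?_
    rw [heig r, Complex.mul_conj, Complex.normSq_mul, Complex.normSq_mul,
        Complex.normSq_I, Complex.normSq_ofReal]
    push_cast
    ring
  -- Step 3: inner sum via partial fractions (s ≠ t)
  have inner_eq : ∀ s t : Fin N, s ≠ t → ∑ r, A r s * A r t
      = A s t * ((∑ r, A r s) - (∑ r, A r t)) + 2 * A s t ^ 2 := by
    intro s t hst
    rw [Finset.sum_congr rfl fun r _ => Am_pf lam hinj s t hst r]
    rw [Finset.sum_add_distrib, Finset.sum_add_distrib]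
    rw [Finset.sum_ite_eq' Finset.univ s (fun _ => Am lam s t ^ 2),
        Finset.sum_ite_eq' Finset.univ t (fun _ => Am lam s t ^ 2)]
    simp only [Finset.mem_univ, if_true]
    rw [← Finset.mul_sum, Finset.sum_sub_distrib]
    ring
  -- Step 4: the "hard" cross term vanishes
  have cross_zero : ∑ s, ∑ t, c s * (starRingEnd ℂ) (c t)
      * (A s t * ((∑ r, A r s) - (∑ r, A r t))) = 0 := by
    have hE : ∑ s, ∑ t, c s * (starRingEnd ℂ) (c t) * (A s t * (∑ r, A r s))
        = ∑ s, c s * (-(Complex.I * μ) * (starRingEnd ℂ) (c s)) * (∑ r, A r s) := by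
      refine Finset.sum_congr rfl fun s _ => ?_
      rw [← heig' s]
      refine Eq.symm ?_
      have e1 : c s * (∑ t, (starRingEnd ℂ) (c t) * A s t)
          = ∑ t, c s * ((starRingEnd ℂ) (c t) * A s t) := by rw [Finset.mul_sum]
      rw [e1, Finset.sum_mul]
      exact Finset.sum_congr rfl fun t _ => by ring
    have hE' : ∑ s, ∑ t, c s * (starRingEnd ℂ) (c t) * (A s t * (∑ r, A r t))
        = ∑ t, (starRingEnd ℂ) (c t) * (-(Complex.I * μ) * c t) * (∑ r, A r t) := by
      rw [Finset.sum_comm]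
      refine Finset.sum_congr rfl fun t _ => ?_
      rw [← heig'' t]
      refine Eq.symm ?_
      have e1 : (starRingEnd ℂ) (c t) * (∑ s, c s * A s t)
          = ∑ s, (starRingEnd ℂ) (c t) * (c s * A s t) := by rw [Finset.mul_sum]
      rw [e1, Finset.sum_mul]
      exact Finset.sum_congr rfl fun s _ => by ring
    have hsplit : ∑ s, ∑ t, c s * (starRingEnd ℂ) (c t) * (A s t * ((∑ r, A r s) - (∑ r, A r t)))
        = (∑ s, ∑ t, c s * (starRingEnd ℂ) (c t) * (A s t * (∑ r, A r s)))
          - ∑ s, ∑ t, c s * (starRingEnd ℂ) (c t) * (A s t * (∑ r, A r t)) := by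
      rw [← Finset.sum_sub_distrib]
      refine Finset.sum_congr rfl fun s _ => ?_
      rw [← Finset.sum_sub_distrib]
      exact Finset.sum_congr rfl fun t _ => by ring
    rw [hsplit, hE, hE', sub_eq_zero]
    exact Finset.sum_congr rfl fun s _ => by ring
  -- Step 5: main identity over ℂ
  have main : ((μ^2 : ℝ) : ℂ) * ∑ r, (Complex.normSq (c r) : ℂ)
      = ∑ s, (Complex.normSq (c s) : ℂ) * (∑ r, (A r s)^2)
        + 2 * ∑ s, ∑ t, c s * (starRingEnd ℂ) (c t) * (A s t)^2 := by
    rw [← lhs_eq, expand]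
    have split : ∀ s : Fin N, ∑ t, c s * (starRingEnd ℂ) (c t) * ∑ r, A r s * A r t
        = (Complex.normSq (c s) : ℂ) * (∑ r, (A r s)^2)
          + ∑ t, (c s * (starRingEnd ℂ) (c t) * (A s t * ((∑ r, A r s) - (∑ r, A r t)))
              + 2 * (c s * (starRingEnd ℂ) (c t) * (A s t)^2)) := by
      intro s
      rw [← Finset.add_sum_erase _ (fun t => c s * (starRingEnd ℂ) (c t) * ∑ r, A r s * A r t)
            (Finset.mem_univ s),
          ← Finset.add_sum_erase _ (fun t => c s * (starRingEnd ℂ) (c t)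
              * (A s t * ((∑ r, A r s) - (∑ r, A r t)))
              + 2 * (c s * (starRingEnd ℂ) (c t) * (A s t)^2)) (Finset.mem_univ s),
          ← add_assoc]
      congr 1
      · -- diagonal term
        have hAss : A s s = 0 := by rw [hA]; exact Am_diag lam s
        rw [hAss]
        rw [Complex.mul_conj]
        have : ∑ r, A r s * A r s = ∑ r, (A r s)^2 :=
          Finset.sum_congr rfl fun r _ => (sq (A r s)).symm
        rw [this]
        ring
      · refine Finset.sum_congr rfl fun t ht => ?_
        have hst : s ≠ t := fun h => (Finset.ne_of_mem_erase ht) h.symm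
        rw [inner_eq s t hst]
        ring
    rw [Finset.sum_congr rfl fun s _ => split s, Finset.sum_add_distrib]
    congr 1
    rw [Finset.sum_congr rfl fun s (_ : s ∈ Finset.univ) => (Finset.sum_add_distrib :
        ∑ t, (c s * (starRingEnd ℂ) (c t) * (A s t * ((∑ r, A r s) - (∑ r, A r t)))
              + 2 * (c s * (starRingEnd ℂ) (c t) * (A s t)^2)) = _),
       Finset.sum_add_distrib, cross_zero, zero_add, Finset.mul_sum]
    exact Finset.sum_congr rfl fun s _ => by
      rw [Finset.mul_sum]
  -- Step 6: take real parts
  simp only [hA, Am] at main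
  have mainR := congrArg Complex.re main
  simp only [Complex.re_sum, Complex.add_re, Complex.mul_re, Complex.ofReal_re,
    Complex.ofReal_im, ← Complex.ofReal_pow, Complex.re_ofNat, Complex.im_ofNat,
    Complex.im_sum, Complex.conj_re, Complex.conj_im, mul_neg, sub_neg_eq_add,
    zero_mul, mul_zero, sub_zero, zero_sub, neg_zero, add_zero] at mainR
  rw [hc, mul_one] at mainR
  have hd : ∀ s, ∑ r, (ar lam r s)^2 ≤ π^2/3/δ^2 := d_bound' lam δ hδ hsep
  have hnq : ∀ s : Fin N, 0 ≤ Complex.normSq (c s) := fun s => Complex.normSq_nonneg _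
  have hdsym : ∀ s : Fin N, ∑ t, (ar lam s t)^2 = ∑ t, (ar lam t s)^2 := by
    intro s
    refine Finset.sum_congr rfl fun t _ => ?_
    rw [ar_skew lam t s, neg_sq]
  -- bound the cross term
  have cross_le : 2 * ∑ s, ∑ t, ((c s).re * (c t).re + (c s).im * (c t).im) * (ar lam s t)^2
      ≤ (∑ s, Complex.normSq (c s) * ∑ t, (ar lam t s)^2)
        + ∑ t, Complex.normSq (c t) * ∑ s, (ar lam s t)^2 := by
    have step1 : 2 * ∑ s, ∑ t, ((c s).re * (c t).re + (c s).im * (c t).im) * (ar lam s t)^2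
        ≤ ∑ s, ∑ t, (Complex.normSq (c s) + Complex.normSq (c t)) * (ar lam s t)^2 := by
      rw [Finset.mul_sum]
      refine Finset.sum_le_sum fun s _ => ?_
      rw [Finset.mul_sum]
      refine Finset.sum_le_sum fun t _ => ?_
      have h2 : (0:ℝ) ≤ (ar lam s t)^2 := sq_nonneg _
      have h1 : 2 * ((c s).re * (c t).re + (c s).im * (c t).im)
          ≤ Complex.normSq (c s) + Complex.normSq (c t) := by
        simp only [Complex.normSq_apply]
        nlinarith [sq_nonneg ((c s).re - (c t).re), sq_nonneg ((c s).im - (c t).im)]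
      nlinarith
    have step2 : ∑ s, ∑ t, (Complex.normSq (c s) + Complex.normSq (c t)) * (ar lam s t)^2
        = (∑ s, Complex.normSq (c s) * ∑ t, (ar lam t s)^2)
          + ∑ t, Complex.normSq (c t) * ∑ s, (ar lam s t)^2 := by
      have e1 : ∀ s : Fin N, ∑ t, (Complex.normSq (c s) + Complex.normSq (c t)) * (ar lam s t)^2
          = (∑ t, Complex.normSq (c s) * (ar lam s t)^2)
            + ∑ t, Complex.normSq (c t) * (ar lam s t)^2 := by
        intro s
        rw [← Finset.sum_add_distrib]
        exact Finset.sum_congr rfl fun t _ => by ring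
      rw [Finset.sum_congr rfl fun s _ => e1 s, Finset.sum_add_distrib]
      congr 1
      · refine Finset.sum_congr rfl fun s _ => ?_
        rw [← Finset.mul_sum, hdsym s]
      · rw [Finset.sum_comm]
        refine Finset.sum_congr rfl fun t _ => ?_
        rw [← Finset.mul_sum]
    linarith [step1, step2.le, step2.ge]
  set D := π^2/3/δ^2 with hD
  have hDpos : 0 ≤ D := by positivity
  have bnd : ∀ f : Fin N → ℝ, (∀ s, f s = ∑ r, (ar lam r s)^2) →
      ∑ s, Complex.normSq (c s) * f s ≤ D := by
    intro f hf
    calc ∑ s, Complex.normSq (c s) * f s ≤ ∑ s, Complex.normSq (c s) * D := by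
          refine Finset.sum_le_sum fun s _ => ?_
          exact mul_le_mul_of_nonneg_left (by rw [hf s]; exact hd s) (hnq s)
      _ = D := by rw [← Finset.sum_mul, hc, one_mul]
  have b1 : ∑ s, Complex.normSq (c s) * ∑ r, (ar lam r s)^2 ≤ D := bnd _ fun s => rfl
  have b2 : ∑ s, Complex.normSq (c s) * ∑ t, (ar lam t s)^2 ≤ D := bnd _ fun s => rfl
  have b3 : ∑ t, Complex.normSq (c t) * ∑ s, (ar lam s t)^2 ≤ D := bnd _ fun t => rfl
  have hμ2 : μ^2 ≤ 3 * D := by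
    have := mainR
    linarith [cross_le, b1, b2, b3, this.le, this.ge]
  have h3D : 3 * D = (π/δ)^2 := by rw [hD]; field_simp
  have hpd : 0 ≤ π/δ := by positivity
  nlinarith [sq_abs μ, abs_nonneg μ]

theorem stmt3 (N : ℕ) (lam : Fin N → ℝ) (δ : ℝ) (hδ : 0 < δ)
    (hsep : ∀ m n : Fin N, m ≠ n → δ ≤ |lam m - lam n|)
    (x y : Fin N → ℂ) :
    ‖∑ m : Fin N, ∑ n ∈ Finset.univ.erase m, x m * y n / ((lam m : ℂ) - lam n)‖ ≤
      (Real.pi / δ) * Real.sqrt (∑ m, ‖x m‖ ^ 2) * Real.sqrt (∑ n, ‖y n‖ ^ 2) := by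
  classical
  set M : Matrix (Fin N) (Fin N) ℂ := Matrix.of (Am lam) with hM
  -- the Hermitian matrix
  have hH : ((-Complex.I) • M).IsHermitian := by
    unfold Matrix.IsHermitian
    ext r s
    simp only [Matrix.conjTranspose_apply, Matrix.smul_apply, star_mul', hM, Matrix.of_apply,
      smul_eq_mul]
    have h1 : star (Am lam s r) = Am lam s r := Am_conj lam s r
    rw [h1, Am_skew lam r s, star_neg, Complex.star_def, Complex.conj_I]
    ring
  set b := hH.eigenvectorBasis with hb
  set θ := hH.eigenvalues with hθdef
  -- each eigenvalue is at most π/δ in absolute value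
  have hθ : ∀ k, |θ k| ≤ π / δ := by
    intro k
    have hnorm : ‖b k‖ = 1 := b.orthonormal.1 k
    have hc : ∑ r, Complex.normSq ((b k) r) = 1 := by
      have h1 := EuclideanSpace.norm_eq (b k)
      rw [hnorm] at h1
      have h2 : ∑ r, ‖(b k) r‖^2 = 1 := by
        have hnn : 0 ≤ ∑ r, ‖(b k) r‖^2 := Finset.sum_nonneg fun r _ => sq_nonneg _
        nlinarith [Real.sq_sqrt hnn]
      rw [← h2]
      exact Finset.sum_congr rfl fun r _ => by
        rw [Complex.normSq_eq_norm_sq]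
    set c : Fin N → ℂ := fun r => b k r with hcdef
    have heigen : ((-Complex.I) • M) *ᵥ c = θ k • c := hH.mulVec_eigenvectorBasis k
    have hMv : M *ᵥ c = (Complex.I * θ k) • c := by
      have h3 : ((-Complex.I) • M) *ᵥ c = (-Complex.I) • (M *ᵥ c) :=
        Matrix.smul_mulVec _ _ _
      rw [h3] at heigen
      have h4 := congrArg (fun v => (Complex.I : ℂ) • v) heigen
      simp only [smul_smul] at h4
      rw [show (Complex.I * -Complex.I) = (1:ℂ) by
        rw [mul_neg, Complex.I_mul_I]; ring, one_smul] at h4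
      rw [h4]
      ext r
      simp only [Pi.smul_apply, smul_eq_mul, Complex.real_smul]
      ring
    refine eig_bound lam δ hδ hsep (θ k) c hc fun r => ?_
    have h5 := congrFun hMv r
    simp only [Matrix.mulVec, dotProduct, Pi.smul_apply, smul_eq_mul, hM,
      Matrix.of_apply] at h5
    exact h5
  -- rewrite the sum as an inner product
  set u : EuclideanSpace ℂ (Fin N) := (WithLp.equiv 2 _).symm (star x) with hu
  set yE : EuclideanSpace ℂ (Fin N) := (WithLp.equiv 2 _).symm y with hy
  have hT : ∑ m : Fin N, ∑ n ∈ Finset.univ.erase m, x m * y n / ((lam m : ℂ) - lam n)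
      = inner ℂ u (Matrix.toEuclideanLin M yE) := by
    rw [hy, WithLp.equiv_symm_apply, Matrix.toEuclideanLin_apply_piLp_toLp, hu,
      WithLp.equiv_symm_apply, EuclideanSpace.inner_toLp_toLp, star_star]
    rw [dotProduct]
    refine Finset.sum_congr rfl fun m _ => ?_
    rw [Matrix.mulVec, dotProduct, mul_comm _ (x m), Finset.mul_sum Finset.univ (fun i => M m i * y i) (x m)]
    refine Eq.symm ?_
    rw [← Finset.sum_erase (f := fun i => x m * (M m i * y i)) (a := m) Finset.univ
      (by simp [hM, Am, ar])]
    refine Finset.sum_congr rfl fun n hn => ?_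
    have hmn : n ≠ m := Finset.ne_of_mem_erase hn
    simp only [hM, Matrix.of_apply, Am, ar, if_neg (fun h : m = n => hmn h.symm)]
    push_cast
    field_simp
  have hMvAll : ∀ k, Matrix.toEuclideanLin M (b k) = (Complex.I * θ k) • (b k) := by
    intro k
    have heigen : ((-Complex.I) • M) *ᵥ (fun r => b k r) = θ k • (fun r => b k r) :=
      hH.mulVec_eigenvectorBasis k
    have h3 : ((-Complex.I) • M) *ᵥ (fun r => b k r)
        = (-Complex.I) • (M *ᵥ (fun r => b k r)) := Matrix.smul_mulVec _ _ _
    rw [h3] at heigen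
    have h4 := congrArg (fun v => (Complex.I : ℂ) • v) heigen
    simp only [smul_smul] at h4
    rw [show (Complex.I * -Complex.I) = (1:ℂ) by
      rw [mul_neg, Complex.I_mul_I]; ring, one_smul] at h4
    ext r
    refine (congrFun h4 r).trans ?_
    show Complex.I * ((θ k : ℂ) * b k r) = (Complex.I * (θ k : ℂ)) * b k r
    ring
  have hexp : Matrix.toEuclideanLin M yE
      = ∑ k, ((b.repr yE k) * (Complex.I * θ k)) • b k := by
    conv_lhs => rw [← b.sum_repr yE]
    rw [_root_.map_sum]
    refine Finset.sum_congr rfl fun k _ => ?_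
    rw [_root_.map_smul, hMvAll k, smul_smul]
  have hinner : (inner ℂ u (Matrix.toEuclideanLin M yE) : ℂ)
      = ∑ k, ((b.repr yE k) * (Complex.I * θ k)) * inner ℂ u (b k) := by
    rw [hexp, inner_sum]
    exact Finset.sum_congr rfl fun k _ => inner_smul_right _ _ _
  -- Parseval facts
  have parseval_u : √(∑ k, ‖(inner ℂ u (b k) : ℂ)‖^2) = ‖u‖ := by
    have h1 : ∀ k, ‖(inner ℂ u (b k) : ℂ)‖ = ‖b.repr u k‖ := by
      intro k
      rw [b.repr_apply_apply u k]
      exact norm_inner_symm _ _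
    have h2 : √(∑ k, ‖b.repr u k‖^2) = ‖b.repr u‖ := (EuclideanSpace.norm_eq _).symm
    rw [Finset.sum_congr rfl fun k _ => by rw [h1 k], h2, LinearIsometryEquiv.norm_map]
  have parseval_y : √(∑ k, ‖b.repr yE k‖^2) = ‖yE‖ := by
    rw [(EuclideanSpace.norm_eq _).symm, LinearIsometryEquiv.norm_map]
  have hnu : ‖u‖ = √(∑ m, ‖x m‖^2) := by
    rw [EuclideanSpace.norm_eq]
    congr 1
    exact Finset.sum_congr rfl fun m _ => by
      simp [hu, WithLp.equiv_symm_apply, norm_star]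
  have hny : ‖yE‖ = √(∑ n, ‖y n‖^2) := by
    rw [EuclideanSpace.norm_eq]
    congr 1
  have hπδ : (0:ℝ) ≤ π/δ := by positivity
  rw [hT]
  calc ‖(inner ℂ u (Matrix.toEuclideanLin M yE) : ℂ)‖
      ≤ ∑ k, ‖((b.repr yE k) * (Complex.I * θ k)) * inner ℂ u (b k)‖ := by
        rw [hinner]; exact norm_sum_le _ _
    _ = ∑ k, ‖b.repr yE k‖ * (|θ k| * ‖(inner ℂ u (b k) : ℂ)‖) := by
        refine Finset.sum_congr rfl fun k _ => ?_
        rw [norm_mul, norm_mul, norm_mul, Complex.norm_I, one_mul, Complex.norm_real,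
          Real.norm_eq_abs, mul_assoc]
    _ ≤ ∑ k, ‖b.repr yE k‖ * ((π/δ) * ‖(inner ℂ u (b k) : ℂ)‖) := by
        refine Finset.sum_le_sum fun k _ => ?_
        refine mul_le_mul_of_nonneg_left ?_ (norm_nonneg _)
        exact mul_le_mul_of_nonneg_right (hθ k) (norm_nonneg _)
    _ = (π/δ) * ∑ k, ‖(inner ℂ u (b k) : ℂ)‖ * ‖b.repr yE k‖ := by
        rw [Finset.mul_sum]
        exact Finset.sum_congr rfl fun k _ => by ring
    _ ≤ (π/δ) * (√(∑ k, ‖(inner ℂ u (b k) : ℂ)‖^2) * √(∑ k, ‖b.repr yE k‖^2)) :=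
        mul_le_mul_of_nonneg_left (Real.sum_mul_le_sqrt_mul_sqrt _ _ _) hπδ
    _ = (π/δ) * (√(∑ m, ‖x m‖^2) * √(∑ n, ‖y n‖^2)) := by
        rw [parseval_u, parseval_y, hnu, hny]
    _ = (π/δ) * √(∑ m, ‖x m‖^2) * √(∑ n, ‖y n‖^2) := by ring
end
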